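/- Shock profile: let λ, ρ ∈ (0,∞)^d and u_0(x) = max(ρ·x, λ·x) (equivalently, u_0(x) = ρ·x when (ρ−λ)·x ≥ 0 and u_0(x) = λ·x when (ρ−λ)·x ≤ 0). Then for all t > 0: u(x,t) = max( ρ·x + t·f(ρ), λ·x + t·f(λ) ); if (ρ−λ)·x ≥ t(f(λ)−f(ρ)) then x + t·∇f(ρ) ∈ I(x,t), and if (ρ−λ)·x ≤ t(f(λ)−f(ρ)) then x + t·∇f(λ) ∈ I(x,t). In particular, if λ ≠ ρ, every point (x,t) with (ρ−λ)·x = t(f(λ)−f(ρ)) is a shock: I(x,t) contains at least the two distinct points x + t·∇f(ρ) and x + t·∇f(λ). -/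

import Mathlib

open Set

noncomputable section

/-- `g(z) = c·(z₁⋯z_d)^{1/(d+1)}` (used only for `z ≥ 0`, where the product is `≥ 0`). -/
def gfun (c : ℝ) (d : ℕ) (z : Fin d → ℝ) : ℝ := c * (∏ i, z i) ^ (((d : ℝ) + 1)⁻¹)

/-- The set of values over which the Hopf-Lax supremum is taken. -/
def hlSet (c : ℝ) (d : ℕ) (u0 : (Fin d → ℝ) → ℝ) (x : Fin d → ℝ) (t : ℝ) : Set ℝ :=
  (fun y => u0 y + t * gfun c d (t⁻¹ • (x - y))) '' {y | y ≤ x}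

/-- The Hopf-Lax function `u(x,t)`, with `u(x,0) = u₀(x)`. -/
def hlu (c : ℝ) (d : ℕ) (u0 : (Fin d → ℝ) → ℝ) (x : Fin d → ℝ) (t : ℝ) : ℝ :=
  if t = 0 then u0 x else sSup (hlSet c d u0 x t)

/-- The set `I(x,t)` of maximizers in the Hopf-Lax formula. -/
def hlI (c : ℝ) (d : ℕ) (u0 : (Fin d → ℝ) → ℝ) (x : Fin d → ℝ) (t : ℝ) :
    Set (Fin d → ℝ) :=
  {y | y ≤ x ∧ hlu c d u0 x t = u0 y + t * gfun c d (t⁻¹ • (x - y))}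

/-- `κ = (c/(d+1))^{d+1}`. -/
def kap (c : ℝ) (d : ℕ) : ℝ := (c / ((d : ℝ) + 1)) ^ (d + 1)

/-- The velocity `f(ρ) = κ (ρ₁⋯ρ_d)⁻¹`. -/
def fvel (c : ℝ) (d : ℕ) (ρ : Fin d → ℝ) : ℝ := kap c d / ∏ i, ρ i

/-- `(∇f(ρ))_i = −κ/((ρ₁⋯ρ_d) ρ_i)`. -/
def gradf (c : ℝ) (d : ℕ) (ρ : Fin d → ℝ) : Fin d → ℝ :=
  fun i => -(kap c d) / ((∏ j, ρ j) * ρ i)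

lemma kap_pos {c : ℝ} (hc : 0 < c) (d : ℕ) : 0 < kap c d :=
  pow_pos (div_pos hc (by positivity)) _

lemma cdiv_pos {c : ℝ} (hc : 0 < c) (d : ℕ) : 0 < c / ((d : ℝ) + 1) :=
  div_pos hc (by positivity)

lemma kap_rpow {c : ℝ} (hc : 0 < c) (d : ℕ) :
    (kap c d) ^ (((d : ℝ) + 1)⁻¹) = c / ((d : ℝ) + 1) := by
  rw [kap, ← Real.rpow_natCast (c / ((d : ℝ) + 1)) (d + 1),
    ← Real.rpow_mul (cdiv_pos hc d).le]
  have h1 : ((d + 1 : ℕ) : ℝ) * ((d : ℝ) + 1)⁻¹ = 1 := by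
    push_cast
    field_simp
  rw [h1, Real.rpow_one]

lemma fvel_pos {c : ℝ} (hc : 0 < c) {d : ℕ} {ρ : Fin d → ℝ} (hρ : ∀ i, 0 < ρ i) :
    0 < fvel c d ρ :=
  div_pos (kap_pos hc d) (Finset.prod_pos fun i _ => hρ i)

/-- AM-GM key inequality: `g(z) ≤ ρ·z + f(ρ)` for `z ≥ 0`. -/
lemma key_ineq {c : ℝ} (hc : 0 < c) {d : ℕ} {ρ : Fin d → ℝ} (hρ : ∀ i, 0 < ρ i)
    {z : Fin d → ℝ} (hz : ∀ i, 0 ≤ z i) :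
    gfun c d z ≤ (∑ i, ρ i * z i) + fvel c d ρ := by
  set e : ℝ := ((d : ℝ) + 1)⁻¹ with he
  have hep : (0:ℝ) < e := by positivity
  set b : Option (Fin d) → ℝ := fun o => o.elim (fvel c d ρ) (fun i => ρ i * z i) with hb
  have hbn : ∀ o, 0 ≤ b o := by
    rintro (_ | i)
    · exact (fvel_pos hc hρ).le
    · exact mul_nonneg (hρ i).le (hz i)
  have hwsum : ∑ _o : Option (Fin d), e = 1 := by
    rw [Finset.sum_const, Finset.card_univ, Fintype.card_option, Fintype.card_fin,
      nsmul_eq_mul, he]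
    push_cast
    field_simp
  have hAM := Real.geom_mean_le_arith_mean_weighted Finset.univ (fun _ => e) b
    (fun _ _ => hep.le) hwsum (fun o _ => hbn o)
  have hprod : ∏ o, b o = kap c d * ∏ i, z i := by
    rw [Fintype.prod_option]
    have : ∏ i, b (some i) = (∏ i, ρ i) * ∏ i, z i := by
      simp [hb, Finset.prod_mul_distrib]
    rw [this]
    have hPne : (∏ i, ρ i) ≠ 0 := (Finset.prod_pos fun i _ => hρ i).ne'
    simp only [hb, Option.elim, fvel]
    field_simp
  have hPl : ∏ o, b o ^ e = (c / ((d:ℝ)+1)) * (∏ i, z i) ^ e := by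
    rw [Real.finset_prod_rpow Finset.univ b (fun o _ => hbn o) e, hprod,
      Real.mul_rpow (kap_pos hc d).le (Finset.prod_nonneg (fun i _ => hz i)),
      kap_rpow hc]
  have hSr : ∑ o, (fun _ => e) o * b o = e * (fvel c d ρ + ∑ i, ρ i * z i) := by
    rw [← Finset.mul_sum, Fintype.sum_option]
    simp [hb]
  rw [hPl, hSr] at hAM
  have hAM2 : ((d:ℝ)+1) * ((c / ((d:ℝ)+1)) * (∏ i, z i) ^ e)
      ≤ ((d:ℝ)+1) * (e * (fvel c d ρ + ∑ i, ρ i * z i)) :=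
    mul_le_mul_of_nonneg_left hAM (by positivity)
  have hd1 : ((d:ℝ)+1) ≠ 0 := by positivity
  rw [gfun]
  calc c * (∏ i, z i) ^ e = ((d:ℝ)+1) * ((c / ((d:ℝ)+1)) * (∏ i, z i) ^ e) := by
        field_simp
    _ ≤ ((d:ℝ)+1) * (e * (fvel c d ρ + ∑ i, ρ i * z i)) := hAM2
    _ = (∑ i, ρ i * z i) + fvel c d ρ := by
        rw [he]; field_simp; ring

/-- The optimal `z₀ = -∇f(ρ)` achieves equality. -/
lemma key_eq {c : ℝ} (hc : 0 < c) {d : ℕ} {ρ : Fin d → ℝ} (hρ : ∀ i, 0 < ρ i) :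
    gfun c d (fun i => kap c d / ((∏ j, ρ j) * ρ i))
      = (∑ i, ρ i * (kap c d / ((∏ j, ρ j) * ρ i))) + fvel c d ρ := by
  set P : ℝ := ∏ j, ρ j with hP
  have hPpos : 0 < P := Finset.prod_pos fun i _ => hρ i
  have hκ := kap_pos hc d
  -- the sum
  have hsum : (∑ i, ρ i * (kap c d / (P * ρ i))) = d * (kap c d / P) := by
    have : ∀ i, ρ i * (kap c d / (P * ρ i)) = kap c d / P := by
      intro i
      have := (hρ i).ne'
      field_simp
    rw [Finset.sum_congr rfl (fun i _ => this i), Finset.sum_const, Finset.card_univ,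
      Fintype.card_fin, nsmul_eq_mul]
  -- the product
  have hprod : (∏ i, kap c d / (P * ρ i)) = kap c d ^ d / P ^ (d + 1) := by
    rw [Finset.prod_div_distrib, Finset.prod_const, Finset.card_univ, Fintype.card_fin,
      Finset.prod_mul_distrib, Finset.prod_const, Finset.card_univ, Fintype.card_fin, ← hP,
      pow_succ]
  -- the rpow computation
  have hd1 : ((d:ℝ)+1) ≠ 0 := by positivity
  have hPe : (P ^ (d+1) : ℝ) ^ (((d : ℝ) + 1)⁻¹) = P := by
    rw [← Real.rpow_natCast P (d+1), ← Real.rpow_mul hPpos.le]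
    have : ((d + 1 : ℕ) : ℝ) * ((d : ℝ) + 1)⁻¹ = 1 := by push_cast; field_simp
    rw [this, Real.rpow_one]
  have hκe : (kap c d ^ d : ℝ) ^ (((d : ℝ) + 1)⁻¹) = (c / ((d:ℝ)+1)) ^ d := by
    rw [← Real.rpow_natCast (kap c d) d, ← Real.rpow_mul hκ.le,
      mul_comm ((d:ℕ):ℝ) (((d : ℝ) + 1)⁻¹), Real.rpow_mul hκ.le,
      kap_rpow hc, Real.rpow_natCast]
  have hg : gfun c d (fun i => kap c d / (P * ρ i)) = ((d:ℝ)+1) * (kap c d / P) := by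
    rw [gfun, hprod, Real.div_rpow (by positivity) (by positivity), hPe, hκe]
    rw [kap, pow_succ]
    field_simp
  rw [hg, hsum, fvel, ← hP]
  ring

lemma neg_gradf {c : ℝ} {d : ℕ} (ρ : Fin d → ℝ) :
    (fun i => kap c d / ((∏ j, ρ j) * ρ i)) = -gradf c d ρ := by
  funext i
  simp [gradf, neg_div]

lemma gradf_neg {c : ℝ} (hc : 0 < c) {d : ℕ} {ρ : Fin d → ℝ} (hρ : ∀ i, 0 < ρ i) (i : Fin d) :
    gradf c d ρ i < 0 := by
  have hPpos : 0 < ∏ j, ρ j := Finset.prod_pos fun j _ => hρ j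
  have := kap_pos hc d
  rw [gradf]
  apply div_neg_of_neg_of_pos (by linarith) (mul_pos hPpos (hρ i))

/-- Linear bound: for `y ≤ x`, `ρ·y + t g((x-y)/t) ≤ ρ·x + t f(ρ)`. -/
lemma lin_bound {c : ℝ} (hc : 0 < c) {d : ℕ} {ρ : Fin d → ℝ} (hρ : ∀ i, 0 < ρ i)
    {x y : Fin d → ℝ} (hyx : y ≤ x) {t : ℝ} (ht : 0 < t) :
    (∑ i, ρ i * y i) + t * gfun c d (t⁻¹ • (x - y))
      ≤ (∑ i, ρ i * x i) + t * fvel c d ρ := by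
  set z : Fin d → ℝ := t⁻¹ • (x - y) with hz
  have hzn : ∀ i, 0 ≤ z i := by
    intro i
    have : y i ≤ x i := hyx i
    have : 0 ≤ x i - y i := by linarith
    simpa [hz, smul_eq_mul] using mul_nonneg (inv_nonneg.2 ht.le) this
  have hxy : ∀ i, x i - y i = t * z i := by
    intro i
    simp [hz, smul_eq_mul]
    field_simp
  have h := key_ineq hc hρ hzn
  have h2 : t * gfun c d z ≤ t * ((∑ i, ρ i * z i) + fvel c d ρ) :=
    mul_le_mul_of_nonneg_left h ht.le
  have h3 : (∑ i, ρ i * x i) - (∑ i, ρ i * y i) = t * ∑ i, ρ i * z i := by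
    rw [← Finset.sum_sub_distrib, Finset.mul_sum]
    congr 1
    funext i
    rw [← mul_sub, hxy i]
    ring
  have h4 : t * ((∑ i, ρ i * z i) + fvel c d ρ)
      = ((∑ i, ρ i * x i) - (∑ i, ρ i * y i)) + t * fvel c d ρ := by
    rw [h3]; ring
  linarith [h2, h4.le]

/-- Value at the candidate maximizer `y = x + t∇f(ρ)`. -/
lemma opt_value {c : ℝ} (hc : 0 < c) {d : ℕ} {ρ : Fin d → ℝ} (hρ : ∀ i, 0 < ρ i)
    (x : Fin d → ℝ) {t : ℝ} (ht : 0 < t) :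
    (∑ i, ρ i * (x + t • gradf c d ρ) i)
        + t * gfun c d (t⁻¹ • (x - (x + t • gradf c d ρ)))
      = (∑ i, ρ i * x i) + t * fvel c d ρ := by
  have hzz : t⁻¹ • (x - (x + t • gradf c d ρ)) = fun i => kap c d / ((∏ j, ρ j) * ρ i) := by
    funext i
    simp [smul_eq_mul, gradf, neg_div]
    field_simp
  have hsum : (∑ i, ρ i * (x + t • gradf c d ρ) i)
      = (∑ i, ρ i * x i) - t * ∑ i, ρ i * (kap c d / ((∏ j, ρ j) * ρ i)) := by
    rw [Finset.mul_sum, ← Finset.sum_sub_distrib]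
    apply Finset.sum_congr rfl
    intro i _
    simp [smul_eq_mul, gradf, neg_div]
    ring
  rw [hzz, hsum, key_eq hc hρ]
  ring

lemma cond_iff {c : ℝ} {d : ℕ} (l p : Fin d → ℝ) (x : Fin d → ℝ) (t : ℝ) :
    (∑ i, (p i - l i) * x i) - t * (fvel c d l - fvel c d p)
      = ((∑ i, p i * x i) + t * fvel c d p) - ((∑ i, l i * x i) + t * fvel c d l) := by
  simp only [sub_mul]
  rw [Finset.sum_sub_distrib]
  ring

/-- Shock profile. -/
theorem shock_profile
    (d : ℕ) (hd : 1 ≤ d) (c : ℝ) (hc : 0 < c)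
    (l p : Fin d → ℝ) (hl : ∀ i, 0 < l i) (hp : ∀ i, 0 < p i) :
    ∀ (x : Fin d → ℝ) (t : ℝ), 0 < t →
      (hlu c d (fun z => max (∑ i, p i * z i) (∑ i, l i * z i)) x t =
          max ((∑ i, p i * x i) + t * fvel c d p) ((∑ i, l i * x i) + t * fvel c d l)) ∧
      ((∑ i, (p i - l i) * x i) ≥ t * (fvel c d l - fvel c d p) →
          x + t • gradf c d p ∈
            hlI c d (fun z => max (∑ i, p i * z i) (∑ i, l i * z i)) x t) ∧
      ((∑ i, (p i - l i) * x i) ≤ t * (fvel c d l - fvel c d p) →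
          x + t • gradf c d l ∈
            hlI c d (fun z => max (∑ i, p i * z i) (∑ i, l i * z i)) x t) ∧
      (l ≠ p → (∑ i, (p i - l i) * x i) = t * (fvel c d l - fvel c d p) →
          x + t • gradf c d p ∈
            hlI c d (fun z => max (∑ i, p i * z i) (∑ i, l i * z i)) x t ∧
          x + t • gradf c d l ∈
            hlI c d (fun z => max (∑ i, p i * z i) (∑ i, l i * z i)) x t ∧
          x + t • gradf c d p ≠ x + t • gradf c d l) := by
  intro x t ht
  set u0 : (Fin d → ℝ) → ℝ := fun z => max (∑ i, p i * z i) (∑ i, l i * z i) with hu0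
  set M : ℝ := max ((∑ i, p i * x i) + t * fvel c d p) ((∑ i, l i * x i) + t * fvel c d l)
    with hM
  -- upper bound
  have hub : ∀ a ∈ hlSet c d u0 x t, a ≤ M := by
    rintro a ⟨y, hy, rfl⟩
    simp only [hu0]
    rw [← max_add_add_right]
    exact max_le_max (lin_bound hc hp hy ht) (lin_bound hc hl hy ht)
  -- the two candidate points
  have hyp_le : x + t • gradf c d p ≤ x := by
    intro i
    simp only [Pi.add_apply, Pi.smul_apply, smul_eq_mul]
    nlinarith [gradf_neg hc hp i]
  have hyl_le : x + t • gradf c d l ≤ x := by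
    intro i
    simp only [Pi.add_apply, Pi.smul_apply, smul_eq_mul]
    nlinarith [gradf_neg hc hl i]
  -- values at candidate points
  have hvp : (∑ i, p i * x i) + t * fvel c d p
      ≤ u0 (x + t • gradf c d p)
          + t * gfun c d (t⁻¹ • (x - (x + t • gradf c d p))) := by
    rw [← opt_value hc hp x ht]
    have : (∑ i, p i * (x + t • gradf c d p) i) ≤ u0 (x + t • gradf c d p) :=
      le_max_left _ _
    linarith
  have hvl : (∑ i, l i * x i) + t * fvel c d l
      ≤ u0 (x + t • gradf c d l)
          + t * gfun c d (t⁻¹ • (x - (x + t • gradf c d l))) := by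
    rw [← opt_value hc hl x ht]
    have : (∑ i, l i * (x + t • gradf c d l) i) ≤ u0 (x + t • gradf c d l) :=
      le_max_right _ _
    linarith
  have hvp_ub := hub _ ⟨x + t • gradf c d p, hyp_le, rfl⟩
  have hvl_ub := hub _ ⟨x + t • gradf c d l, hyl_le, rfl⟩
  -- sup equals M
  have hsup : hlu c d u0 x t = M := by
    rw [hlu, if_neg ht.ne']
    apply IsGreatest.csSup_eq
    constructor
    · rcases le_total ((∑ i, l i * x i) + t * fvel c d l)
        ((∑ i, p i * x i) + t * fvel c d p) with h | h
      · have hMe : M = (∑ i, p i * x i) + t * fvel c d p := max_eq_left h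
        refine ⟨x + t • gradf c d p, hyp_le, ?_⟩
        exact le_antisymm hvp_ub (by rw [hMe]; exact hvp)
      · have hMe : M = (∑ i, l i * x i) + t * fvel c d l := max_eq_right h
        refine ⟨x + t • gradf c d l, hyl_le, ?_⟩
        exact le_antisymm hvl_ub (by rw [hMe]; exact hvl)
    · exact hub
  -- memberships
  have memp : (∑ i, (p i - l i) * x i) ≥ t * (fvel c d l - fvel c d p) →
      x + t • gradf c d p ∈ hlI c d u0 x t := by
    intro hge
    have hdom : (∑ i, l i * x i) + t * fvel c d l ≤ (∑ i, p i * x i) + t * fvel c d p := by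
      have := cond_iff (c := c) l p x t
      linarith [this]
    refine ⟨hyp_le, ?_⟩
    rw [hsup]
    have hMe : M = (∑ i, p i * x i) + t * fvel c d p := max_eq_left hdom
    exact le_antisymm (by rw [hMe]; exact hvp) hvp_ub
  have meml : (∑ i, (p i - l i) * x i) ≤ t * (fvel c d l - fvel c d p) →
      x + t • gradf c d l ∈ hlI c d u0 x t := by
    intro hge
    have hdom : (∑ i, p i * x i) + t * fvel c d p ≤ (∑ i, l i * x i) + t * fvel c d l := by
      have := cond_iff (c := c) l p x t
      linarith [this]
    refine ⟨hyl_le, ?_⟩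
    rw [hsup]
    have hMe : M = (∑ i, l i * x i) + t * fvel c d l := max_eq_right hdom
    exact le_antisymm (by rw [hMe]; exact hvl) hvl_ub
  refine ⟨hsup, memp, meml, ?_⟩
  intro hlp heq
  refine ⟨memp heq.ge, meml heq.le, ?_⟩
  -- distinctness
  intro hcon
  apply hlp
  have hgg : gradf c d p = gradf c d l := by
    have := add_left_cancel hcon
    exact smul_right_injective _ ht.ne' this
  have hPp : 0 < ∏ j, p j := Finset.prod_pos fun j _ => hp j
  have hPl : 0 < ∏ j, l j := Finset.prod_pos fun j _ => hl j
  have hκ := kap_pos hc d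
  have hkey : ∀ i, (∏ j, l j) * l i = (∏ j, p j) * p i := by
    intro i
    have h1 : -(kap c d) / ((∏ j, p j) * p i) = -(kap c d) / ((∏ j, l j) * l i) :=
      congrFun hgg i
    have hp' : (∏ j, p j) * p i ≠ 0 := (mul_pos hPp (hp i)).ne'
    have hl' : (∏ j, l j) * l i ≠ 0 := (mul_pos hPl (hl i)).ne'
    field_simp at h1
    rw [neg_inj, div_eq_div_iff (hp i).ne' (hl i).ne'] at h1
    linarith
  have hprod_eq : (∏ j, l j) = ∏ j, p j := by
    have h2 : (∏ j, l j) ^ (d + 1) = (∏ j, p j) ^ (d + 1) := by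
      have := Finset.prod_congr rfl (fun i (_ : i ∈ Finset.univ) => hkey i)
      rwa [Finset.prod_mul_distrib, Finset.prod_mul_distrib, Finset.prod_const,
        Finset.prod_const, Finset.card_univ, Fintype.card_fin, ← pow_succ,
        ← pow_succ] at this
    exact (pow_left_inj₀ hPl.le hPp.le (Nat.succ_ne_zero d)).mp h2
  funext i
  have := hkey i
  rw [hprod_eq] at this
  exact mul_left_cancel₀ hPp.ne' this

end
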